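/- With the definitions of the (n+1)-dimensional black brane thermodynamics (single rotation parameter), the Gibbs free energy defined by G = I/β with Euclidean action I = −(βV/16π)·(r₊^{2n−2}+q²ℓ²)/(r₊^{n−2}ℓ²) satisfies the Legendre-transform identity G = M − TS − ΩJ − ΦQ, as an identity among explicit functions of (r₊, a, q). -/

import Mathlib

noncomputable def Xi (ℓ a : ℝ) : ℝ := Real.sqrt (1 + a ^ 2 / ℓ ^ 2)

noncomputable def mMass (n : ℕ) (ℓ r q : ℝ) : ℝ := r ^ n / ℓ ^ 2 + q ^ 2 / r ^ (n - 2)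

noncomputable def Mmass (n : ℕ) (ℓ V r a q : ℝ) : ℝ :=
  V / (16 * Real.pi) * mMass n ℓ r q * ((n : ℝ) * (Xi ℓ a) ^ 2 - 1)

noncomputable def Sent (n : ℕ) (ℓ V r a : ℝ) : ℝ := Xi ℓ a * V / 4 * r ^ (n - 1)

noncomputable def Jang (n : ℕ) (ℓ V r a q : ℝ) : ℝ :=
  V / (16 * Real.pi) * (n : ℝ) * Xi ℓ a * mMass n ℓ r q * a

noncomputable def Qch (n : ℕ) (ℓ V a q : ℝ) : ℝ :=
  Xi ℓ a * V / (4 * Real.pi) * Real.sqrt (((n : ℝ) - 1) * ((n : ℝ) - 2) / 2) * q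

noncomputable def Temp (n : ℕ) (ℓ r a q : ℝ) : ℝ :=
  ((n : ℝ) * r ^ (2 * n - 2) - ((n : ℝ) - 2) * q ^ 2 * ℓ ^ 2) /
    (4 * Real.pi * ℓ ^ 2 * Xi ℓ a * r ^ (2 * n - 3))

noncomputable def Omg (ℓ a : ℝ) : ℝ := a / (Xi ℓ a * ℓ ^ 2)

noncomputable def Pot (n : ℕ) (ℓ r a q : ℝ) : ℝ :=
  Real.sqrt (((n : ℝ) - 1) / (2 * ((n : ℝ) - 2))) * q / (Xi ℓ a * r ^ (n - 2))

/-- the Gibbs free energy G = I/β, with Euclidean action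
I = −(βV/16π)·(r₊^{2n−2}+q²ℓ²)/(r₊^{n−2}ℓ²), satisfies the Legendre-transform
identity G = M − TS − ΩJ − ΦQ as an identity among the explicit functions of
(r₊, a, q). -/
theorem black_brane_gibbs_legendre
    (n : ℕ) (hn : 3 ≤ n) (ℓ V rp a q : ℝ)
    (hℓ : 0 < ℓ) (hV : 0 < V) (hrp : 0 < rp)
    (hT : 0 < Temp n ℓ rp a q) :
    -(V / (16 * Real.pi)) * (rp ^ (2 * n - 2) + q ^ 2 * ℓ ^ 2) / (rp ^ (n - 2) * ℓ ^ 2) =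
      Mmass n ℓ V rp a q - Temp n ℓ rp a q * Sent n ℓ V rp a -
        Omg ℓ a * Jang n ℓ V rp a q - Pot n ℓ rp a q * Qch n ℓ V a q := by
  obtain ⟨m, rfl⟩ : ∃ m, n = m + 3 := ⟨n - 3, by omega⟩
  have hπ : (Real.pi : ℝ) ≠ 0 := Real.pi_ne_zero
  have hX : Xi ℓ a ≠ 0 := ne_of_gt (Real.sqrt_pos.2 (by positivity))
  have hX2 : Xi ℓ a ^ 2 = 1 + a ^ 2 / ℓ ^ 2 := Real.sq_sqrt (by positivity)
  have hsq : Real.sqrt (((m:ℝ) + 3 - 1) / (2 * ((m:ℝ) + 3 - 2))) *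
      Real.sqrt (((m:ℝ) + 3 - 1) * ((m:ℝ) + 3 - 2) / 2) = ((m:ℝ) + 2) / 2 := by
    have e1 : ((m:ℝ) + 3 - 1) = (m:ℝ) + 2 := by ring
    have e2 : ((m:ℝ) + 3 - 2) = (m:ℝ) + 1 := by ring
    have hm : ((m:ℝ) + 1) ≠ 0 := by positivity
    rw [e1, e2, ← Real.sqrt_mul (by positivity)]
    rw [show ((m:ℝ) + 2) / (2 * ((m:ℝ) + 1)) * (((m:ℝ) + 2) * ((m:ℝ) + 1) / 2)
        = (((m:ℝ) + 2) / 2) ^ 2 by field_simp]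
    exact Real.sqrt_sq (by positivity)
  have hTS : Temp (m+3) ℓ rp a q * Sent (m+3) ℓ V rp a =
      V * (((m:ℝ)+3) * rp ^ (2*m+4) - ((m:ℝ)+1) * q^2 * ℓ^2) / (16 * Real.pi * ℓ^2 * rp^(m+1)) := by
    simp only [Temp, Sent, show 2 * (m + 3) - 2 = 2*m+4 by omega,
      show 2 * (m + 3) - 3 = 2*m+3 by omega, show m + 3 - 1 = m + 2 by omega]
    push_cast
    field_simp
    ring
  have hOJ : Omg ℓ a * Jang (m+3) ℓ V rp a q =
      V * ((m:ℝ)+3) * mMass (m+3) ℓ rp q * a^2 / (16 * Real.pi * ℓ^2) := by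
    simp only [Omg, Jang]
    push_cast
    field_simp
  have hPQ : Pot (m+3) ℓ rp a q * Qch (m+3) ℓ V a q =
      V * ((m:ℝ)+2) * q^2 / (8 * Real.pi * rp^(m+1)) := by
    simp only [Pot, Qch, show m + 3 - 2 = m + 1 by omega]
    push_cast
    rw [div_mul_eq_mul_div, show Real.sqrt (((m:ℝ) + 3 - 1) / (2 * ((m:ℝ) + 3 - 2))) * q *
      (Xi ℓ a * V / (4 * Real.pi) * Real.sqrt (((m:ℝ) + 3 - 1) * ((m:ℝ) + 3 - 2) / 2) * q)
      = (Real.sqrt (((m:ℝ) + 3 - 1) / (2 * ((m:ℝ) + 3 - 2))) *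
         Real.sqrt (((m:ℝ) + 3 - 1) * ((m:ℝ) + 3 - 2) / 2)) * (q * (Xi ℓ a * V / (4 * Real.pi)) * q)
      by ring, hsq]
    field_simp
    ring
  rw [hTS, hOJ, hPQ]
  simp only [Mmass, mMass, show m + 3 - 2 = m + 1 by omega,
    show 2 * (m + 3) - 2 = 2 * m + 4 by omega]
  rw [hX2]
  push_cast
  field_simp
  ring
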